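/- For every integer h ≥ 3, the number of Fink–Mao region words of length h equals (2^(h−2) − (−1)^h)/3. -/

import Mathlib

/-- A region of the tie diagram: left, right, or center. -/
inductive Region : Type
  | L | R | C
deriving DecidableEq

open Region

/-- A Fink–Mao region word: a list of letters from {L, R, C} with consecutive
letters distinct, first letter `L`, ending with the suffix `L,R,C` or `R,L,C`. -/
def FMWord (w : List Region) : Prop :=
  w.Chain' (· ≠ ·) ∧ w.head? = some L ∧
    ([L, R, C] <:+ w ∨ [R, L, C] <:+ w)

instance : Fintype Region := ⟨{L, R, C}, by intro x; cases x <;> simp⟩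

/-- chain words of length n+1 with head r and last letter L -/
def T : ℕ → Region → Finset (List Region)
  | 0, L => {[L]}
  | 0, R => ∅
  | 0, C => ∅
  | n+1, r => (Finset.univ.erase r).biUnion fun s => (T n s).image (r :: ·)

lemma mem_T : ∀ (n : ℕ) (r : Region) (w : List Region),
    w ∈ T n r ↔ w.Chain' (· ≠ ·) ∧ w.length = n + 1 ∧
      w.head? = some r ∧ w.getLast? = some L := by
  intro n
  induction n with
  | zero =>
    intro r w
    constructor
    · intro hw
      cases r <;> simp [T] at hw <;> subst hw <;> simp [List.Chain']
    · rintro ⟨h1, h2, h3, h4⟩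
      match w, h2 with
      | [a], _ =>
        simp at h3 h4
        subst h3; subst h4
        simp [T]
  | succ n ih =>
    intro r w
    simp only [T, Finset.mem_biUnion, Finset.mem_erase, Finset.mem_image, Finset.mem_univ]
    constructor
    · rintro ⟨s, hs, u, hu, rfl⟩
      rw [ih] at hu
      obtain ⟨h1, h2, h3, h4⟩ := hu
      have hne : u ≠ [] := by intro h; simp [h] at h3
      obtain ⟨x, xs, rfl⟩ := List.exists_cons_of_ne_nil hne
      refine ⟨?_, by simp [← h2], by simp, by simpa using h4⟩
      unfold List.Chain'
      rw [List.isChain_cons]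
      exact ⟨by intro y hy; rw [h3] at hy; simp at hy; subst hy; exact Ne.symm hs.1, h1⟩
    · rintro ⟨h1, h2, h3, h4⟩
      match w with
      | a :: u =>
        simp at h3; subst h3
        have hne : u ≠ [] := by intro h; subst h; simp at h2
        obtain ⟨b, v, rfl⟩ := List.exists_cons_of_ne_nil hne
        unfold List.Chain' at h1
        rw [List.isChain_cons_cons] at h1
        refine ⟨b, ⟨h1.1.symm, trivial⟩, b :: v, ?_, rfl⟩
        rw [ih]
        refine ⟨h1.2, by simp at h2 ⊢; omega, by simp, ?_⟩
        simpa using h4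

lemma card_T_succ (n : ℕ) (r : Region) :
    (T (n+1) r).card = ∑ s ∈ Finset.univ.erase r, (T n s).card := by
  show ((Finset.univ.erase r).biUnion fun s => (T n s).image (r :: ·)).card = _
  rw [Finset.card_biUnion]
  · exact Finset.sum_congr rfl fun s _ =>
      Finset.card_image_of_injective _ (fun a b h => by simpa using h)
  · intro s _ t _ hst
    rw [Function.onFun, Finset.disjoint_left]
    rintro w hw hw'
    simp only [Finset.mem_image] at hw hw'
    obtain ⟨u, hu, rfl⟩ := hw
    obtain ⟨u', hu', he⟩ := hw'
    have : u' = u := by simpa using he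
    subst this
    rw [mem_T] at hu hu'
    rw [hu.2.2.1] at hu'
    exact hst (by simpa using hu'.2.2.1)

lemma card_T_formula (n : ℕ) :
    3 * ((T n L).card : ℤ) = 2^n + 2*(-1)^n ∧
    3 * ((T n R).card : ℤ) = 2^n - (-1)^n ∧
    3 * ((T n C).card : ℤ) = 2^n - (-1)^n := by
  induction n with
  | zero => simp [T]
  | succ n ih =>
    obtain ⟨hL, hR, hC⟩ := ih
    have eL : Finset.univ.erase L = ({R, C} : Finset Region) := by decide
    have eR : Finset.univ.erase R = ({L, C} : Finset Region) := by decide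
    have eC : Finset.univ.erase C = ({L, R} : Finset Region) := by decide
    have p1 : (2:ℤ)^(n+1) = 2 * 2^n := by ring
    have p2 : ((-1:ℤ))^(n+1) = -(-1)^n := by ring
    refine ⟨?_, ?_, ?_⟩ <;>
      rw [card_T_succ] <;>
      [rw [eL]; rw [eR]; rw [eC]] <;>
      rw [Finset.sum_pair (by decide)] <;>
      push_cast <;>
      rw [p1, p2] <;>
      linarith


lemma chain'_ne_reverse (l : List Region) :
    l.reverse.Chain' (· ≠ ·) ↔ l.Chain' (· ≠ ·) := by
  unfold List.Chain'
  rw [List.isChain_reverse]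
  constructor <;> exact fun hl => hl.imp fun a b hab => Ne.symm hab

lemma prefix_iff (n : ℕ) (x y : Region) (hx : x ≠ C) (hxy : x ≠ y) (v : List Region) :
    (v.Chain' (· ≠ ·) ∧ v.getLast? = some L ∧ [C, x, y] <+: v ∧ v.length = n + 3) ↔
      ∃ u ∈ T n y, v = C :: x :: u := by
  constructor
  · rintro ⟨h1, h2, ⟨t, rfl⟩, h4⟩
    refine ⟨y :: t, ?_, rfl⟩
    rw [mem_T]
    refine ⟨h1.tail.tail, by simp at h4 ⊢; omega, rfl, ?_⟩
    rwa [show [C, x, y] ++ t = C :: x :: y :: t from rfl, List.getLast?_cons_cons,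
      List.getLast?_cons_cons] at h2
  · rintro ⟨u, hu, rfl⟩
    rw [mem_T] at hu
    obtain ⟨h1, h2, h3, h4⟩ := hu
    have hne : u ≠ [] := by rintro rfl; simp at h3
    obtain ⟨a, t, rfl⟩ := List.exists_cons_of_ne_nil hne
    simp only [List.head?_cons, Option.some_inj] at h3
    subst h3
    refine ⟨?_, by simpa using h4, ⟨t, rfl⟩, by simp at h2 ⊢; omega⟩
    unfold List.Chain'
    rw [List.isChain_cons_cons, List.isChain_cons_cons]
    exact ⟨by simpa using hx.symm, hxy, h1⟩

lemma FM_iff (n : ℕ) (w : List Region) :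
    (FMWord w ∧ w.length = n + 3) ↔
      ((∃ u ∈ T n L, w = (C :: R :: u).reverse) ∨ (∃ u ∈ T n R, w = (C :: L :: u).reverse)) := by
  have key : (FMWord w ∧ w.length = n + 3) ↔
      ((w.reverse.Chain' (· ≠ ·) ∧ w.reverse.getLast? = some L ∧
        [C, R, L] <+: w.reverse ∧ w.reverse.length = n + 3) ∨
       (w.reverse.Chain' (· ≠ ·) ∧ w.reverse.getLast? = some L ∧
        [C, L, R] <+: w.reverse ∧ w.reverse.length = n + 3)) := by
    rw [show ([C, R, L] : List Region) = [L, R, C].reverse from rfl,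
        show ([C, L, R] : List Region) = [R, L, C].reverse from rfl]
    simp only [chain'_ne_reverse, List.getLast?_reverse, List.reverse_prefix,
      List.length_reverse]
    unfold FMWord
    tauto
  rw [key, prefix_iff n R L (by simp) (by simp), prefix_iff n L R (by simp) (by simp)]
  constructor
  · rintro (⟨u, hu, he⟩ | ⟨u, hu, he⟩)
    · exact Or.inl ⟨u, hu, by rw [← he, List.reverse_reverse]⟩
    · exact Or.inr ⟨u, hu, by rw [← he, List.reverse_reverse]⟩
  · rintro (⟨u, hu, rfl⟩ | ⟨u, hu, rfl⟩)
    · exact Or.inl ⟨u, hu, by rw [List.reverse_reverse]⟩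
    · exact Or.inr ⟨u, hu, by rw [List.reverse_reverse]⟩

/-- For every `h ≥ 3`, the number of Fink–Mao region words of length `h` equals
`(2^(h-2) - (-1)^h)/3`. -/
theorem count_FMWords (h : ℕ) (hh : 3 ≤ h) :
    (Nat.card {w : List Region // FMWord w ∧ w.length = h} : ℤ) =
      (2 ^ (h - 2) - (-1) ^ h) / 3 := by
  obtain ⟨k, rfl⟩ : ∃ k, h = k + 3 := ⟨h - 3, by omega⟩
  set G : Finset (List Region) :=
    ((T k L).image (fun u => (C :: R :: u).reverse)) ∪
    ((T k R).image (fun u => (C :: L :: u).reverse)) with hG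
  have hmem : ∀ w : List Region, (FMWord w ∧ w.length = k + 3) ↔ w ∈ G := by
    intro w
    rw [FM_iff, hG, Finset.mem_union, Finset.mem_image, Finset.mem_image]
    constructor
    · rintro (⟨u, hu, rfl⟩ | ⟨u, hu, rfl⟩)
      · exact Or.inl ⟨u, hu, rfl⟩
      · exact Or.inr ⟨u, hu, rfl⟩
    · rintro (⟨u, hu, rfl⟩ | ⟨u, hu, rfl⟩)
      · exact Or.inl ⟨u, hu, rfl⟩
      · exact Or.inr ⟨u, hu, rfl⟩
  have hcard : Nat.card {w : List Region // FMWord w ∧ w.length = k + 3} = G.card := by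
    rw [Nat.card_congr (Equiv.subtypeEquivRight hmem)]
    exact Nat.card_eq_finsetCard G
  have hinj : ∀ x : Region, Function.Injective (fun u : List Region => (C :: x :: u).reverse) := by
    intro x a b hab
    simpa using hab
  have hdisj : Disjoint ((T k L).image (fun u => (C :: R :: u).reverse))
      ((T k R).image (fun u => (C :: L :: u).reverse)) := by
    rw [Finset.disjoint_left]
    rintro w hw hw'
    simp only [Finset.mem_image] at hw hw'
    obtain ⟨u, _, rfl⟩ := hw
    obtain ⟨u', _, he⟩ := hw'
    have := List.reverse_injective he
    simp at this
  have hGcard : G.card = (T k L).card + (T k R).card := by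
    rw [hG, Finset.card_union_of_disjoint hdisj,
      Finset.card_image_of_injective _ (hinj R), Finset.card_image_of_injective _ (hinj L)]
  obtain ⟨hL, hR, _⟩ := card_T_formula k
  have h3 : 3 * (Nat.card {w : List Region // FMWord w ∧ w.length = k + 3} : ℤ) =
      2 ^ (k + 1) - (-1) ^ (k + 3) := by
    rw [hcard, hGcard]
    have p1 : (2:ℤ) ^ (k + 1) = 2 * 2 ^ k := by ring
    have p2 : ((-1:ℤ)) ^ (k + 3) = -(-1) ^ k := by ring
    push_cast
    rw [p1, p2]
    linarith
  rw [show k + 3 - 2 = k + 1 from rfl, ← h3, Int.mul_ediv_cancel_left _ (by norm_num : (3:ℤ) ≠ 0)]
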